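/- Let γ^k_{ij} ∈ ℝ (i,j,k ∈ {1,2}, γ^k_{ij} = γ^k_{ji}) be constants with γ¹_{12} = 0 and γ¹_{22} = 0, and let D be the connection on ℝ² with constant Christoffel symbols Γ^k_{ij} = γ^k_{ij} (a Type A locally homogeneous connection with Ricci tensor of rank at most one). If H : ℝ → ℝ is twice differentiable and satisfies the linear ODE H''(t) − γ¹_{11} H'(t) + 2(γ¹_{11} γ²_{12} + γ²_{11} γ²_{22} − (γ²_{12})²) = 0 for all t, then h(x¹, x²) := H(x¹) satisfies the affine gradient Ricci soliton equation Hes_h(∂_i,∂_j) + 2ρ^{sym}_{ij} = 0 on ℝ² for all i,j ∈ {1,2}. -/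
import Mathlib


noncomputable section

/-- Points of the affine surface (local coordinates `(x¹,x²)`). -/
abbrev Pt2 := Fin 2 → ℝ

/-- Partial derivative `∂_{x^i}`. -/
def pd2 (i : Fin 2) (f : Pt2 → ℝ) (p : Pt2) : ℝ :=
  fderiv ℝ f p (Pi.single i 1)

/-- The Ricci tensor `ρ_{ij}` of the affine connection with Christoffel symbols `Γ^k_{ij}`:
`ρ_{ij} = Σ_k ∂_{x^k}Γ^k_{ij} − ∂_{x^i}(Σ_k Γ^k_{kj}) + Σ_{k,l}(Γ^k_{kl}Γ^l_{ij} − Γ^k_{il}Γ^l_{kj})`. -/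
def ricciD (Γ : Fin 2 → Fin 2 → Fin 2 → Pt2 → ℝ) (i j : Fin 2) (p : Pt2) : ℝ :=
  (∑ k : Fin 2, pd2 k (Γ k i j) p) - pd2 i (fun q => ∑ k : Fin 2, Γ k k j q) p
    + ∑ k : Fin 2, ∑ l : Fin 2, (Γ k k l p * Γ l i j p - Γ k i l p * Γ l k j p)

/-- The symmetric part `ρ^{sym}_{ij} = ½(ρ_{ij}+ρ_{ji})` of the Ricci tensor. -/
def ricciDSym (Γ : Fin 2 → Fin 2 → Fin 2 → Pt2 → ℝ) (i j : Fin 2) (p : Pt2) : ℝ :=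
  (ricciD Γ i j p + ricciD Γ j i p) / 2

/-- The affine Hessian `Hes_h(∂_i,∂_j) = ∂_i∂_j h − Σ_k Γ^k_{ij} ∂_k h`. -/
def hessD (Γ : Fin 2 → Fin 2 → Fin 2 → Pt2 → ℝ) (h : Pt2 → ℝ) (i j : Fin 2) (p : Pt2) : ℝ :=
  pd2 i (pd2 j h) p - ∑ k : Fin 2, Γ k i j p * pd2 k h p

/-- The covariant derivative of the Ricci tensor:
`(D_{∂_i}ρ)_{jk} = ∂_i ρ_{jk} − Σ_l Γ^l_{ij} ρ_{lk} − Σ_l Γ^l_{ik} ρ_{jl}`. -/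
def covRicciD (Γ : Fin 2 → Fin 2 → Fin 2 → Pt2 → ℝ) (i j k : Fin 2) (p : Pt2) : ℝ :=
  pd2 i (fun q => ricciD Γ j k q) p - (∑ l : Fin 2, Γ l i j p * ricciD Γ l k p)
    - ∑ l : Fin 2, Γ l i k p * ricciD Γ j l p


lemma pd2_const' (c : ℝ) (i : Fin 2) (p : Pt2) : pd2 i (fun _ => c) p = 0 := by
  simp [pd2]

lemma pd2_comp' (F : ℝ → ℝ) (hF : Differentiable ℝ F) (i : Fin 2) (p : Pt2) :
    pd2 i (fun q => F (q 0)) p = deriv F (p 0) * (Pi.single i 1 : Pt2) 0 := by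
  have hπ : (fun q : Pt2 => F (q 0)) = F ∘ (ContinuousLinearMap.proj 0 : Pt2 →L[ℝ] ℝ) := rfl
  unfold pd2
  rw [hπ, fderiv_comp _ (hF.differentiableAt)
    ((ContinuousLinearMap.proj 0 : Pt2 →L[ℝ] ℝ).differentiableAt)]
  simp [ContinuousLinearMap.fderiv]
  ring

lemma pd2_comp0' (F : ℝ → ℝ) (hF : Differentiable ℝ F) (p : Pt2) :
    pd2 0 (fun q => F (q 0)) p = deriv F (p 0) := by
  rw [pd2_comp' F hF]; simp

lemma pd2_comp1' (F : ℝ → ℝ) (hF : Differentiable ℝ F) (p : Pt2) :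
    pd2 1 (fun q => F (q 0)) p = 0 := by
  rw [pd2_comp' F hF]; simp

/-- For a Type A homogeneous connection with constant Christoffel symbols
`γ^k_{ij}` satisfying `γ¹_{12} = γ¹_{22} = 0` (Ricci tensor of rank at most one), any
solution `H` of the linear ODE
`H'' − γ¹_{11} H' + 2(γ¹_{11}γ²_{12} + γ²_{11}γ²_{22} − (γ²_{12})²) = 0`
yields an affine gradient Ricci soliton with potential `h(x¹,x²) = H(x¹)`.
(Index convention: `γ k i j = γ^{k+1}_{(i+1)(j+1)}`.) -/
theorem stmt7 (γ : Fin 2 → Fin 2 → Fin 2 → ℝ)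
    (hγsym : ∀ k i j, γ k i j = γ k j i)
    (h12 : γ 0 0 1 = 0) (h22 : γ 0 1 1 = 0)
    (Γ : Fin 2 → Fin 2 → Fin 2 → Pt2 → ℝ) (hΓ : Γ = fun k i j _ => γ k i j)
    (H : ℝ → ℝ) (hH1 : Differentiable ℝ H) (hH2 : Differentiable ℝ (deriv H))
    (hODE : ∀ t : ℝ, deriv (deriv H) t - γ 0 0 0 * deriv H t
      + 2 * (γ 0 0 0 * γ 1 0 1 + γ 1 0 0 * γ 1 1 1 - (γ 1 0 1) ^ 2) = 0)
    (h : Pt2 → ℝ) (hh : h = fun p => H (p 0)) :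
    ∀ p : Pt2, ∀ i j : Fin 2, hessD Γ h i j p + 2 * ricciDSym Γ i j p = 0 := by
  subst hΓ hh
  have hric : ∀ i j p, ricciD (fun k i j _ => γ k i j) i j p
      = ∑ k : Fin 2, ∑ l : Fin 2, (γ k k l * γ l i j - γ k i l * γ l k j) := by
    intro i j p
    simp only [ricciD, Fin.sum_univ_two]
    rw [pd2_const', pd2_const', show (fun q : Pt2 => γ 0 0 j + γ 1 1 j) =
      (fun _ : Pt2 => γ 0 0 j + γ 1 1 j) from rfl, pd2_const']
    ring
  have hD0 : (pd2 0 fun p : Pt2 => H (p 0)) = fun p : Pt2 => deriv H (p 0) :=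
    funext (pd2_comp0' H hH1)
  have hD1 : (pd2 1 fun p : Pt2 => H (p 0)) = fun _ : Pt2 => (0 : ℝ) :=
    funext (pd2_comp1' H hH1)
  have e10 : γ 0 1 0 = 0 := by rw [hγsym]; exact h12
  have e110 : γ 1 1 0 = γ 1 0 1 := hγsym 1 1 0
  intro p i j
  have hode := hODE (p 0)
  fin_cases i <;> fin_cases j <;>
    simp only [hessD, ricciDSym, hric, Fin.sum_univ_two, Fin.isValue, Fin.mk_zero, Fin.mk_one,
      hD0, hD1, pd2_comp0' (deriv H) hH2, pd2_comp1' (deriv H) hH2, pd2_const',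
      h12, h22, e10, e110] <;>
    nlinarith [hode, sq_nonneg (γ 1 0 1)]

end
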